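/- Assume Condition (ii) (H¹-convergence) and Condition (iii) (L²-stability). Then the first Ritz values of the discretised forms satisfy liminf_{n→∞} λ̃_n ≥ λ₁. -/

import Mathlib

open Filter Topology
open scoped RealInnerProductSpace

lemma bilin_cs {V : Type*} [AddCommGroup V] [Module ℝ V]
    (b : V →ₗ[ℝ] V →ₗ[ℝ] ℝ) (hsymm : ∀ u v, b u v = b v u)
    (hpos : ∀ v, 0 ≤ b v v) (x y : V) : (b x y)^2 ≤ b x x * b y y := by
  have key : ∀ t : ℝ, 0 ≤ b x x * (t * t) + (2 * b x y) * t + b y y := by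
    intro t
    have h := hpos (t • x + y)
    have : b (t • x + y) (t • x + y)
        = b x x * (t * t) + (2 * b x y) * t + b y y := by
      simp [map_add, map_smul, LinearMap.add_apply, LinearMap.smul_apply,
        smul_eq_mul, hsymm y x]
      ring
    linarith [this ▸ h]
  have hd := discrim_le_zero key
  rw [discrim] at hd
  nlinarith [hd]

lemma bilin_quad_continuous {V : Type*} [NormedAddCommGroup V] [NormedSpace ℝ V]
    (b : V →ₗ[ℝ] V →ₗ[ℝ] ℝ) (M : ℝ) (hbdd : ∀ u v, |b u v| ≤ M * ‖u‖ * ‖v‖) :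
    Continuous (fun x => b x x) := by
  let B : V →L[ℝ] V →L[ℝ] ℝ := LinearMap.mkContinuous₂ b M (by
    intro x y; simpa [Real.norm_eq_abs] using hbdd x y)
  have : (fun x => b x x) = fun x => B x x := rfl
  rw [this]
  exact (ContinuousLinearMap.continuous₂ B).comp (continuous_id.prodMk continuous_id)

/-- Lemma B: lower semicontinuity of a PSD quadratic form on closed convex hulls. -/
lemma quad_le_on_closure_convexHull {V : Type*} [NormedAddCommGroup V] [NormedSpace ℝ V]
    (b : V →ₗ[ℝ] V →ₗ[ℝ] ℝ) (hsymm : ∀ u v, b u v = b v u)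
    (M : ℝ) (hbdd : ∀ u v, |b u v| ≤ M * ‖u‖ * ‖v‖)
    (hpos : ∀ v, 0 ≤ b v v)
    (s : Set V) (c : ℝ) (hc : 0 ≤ c) (hs : ∀ x ∈ s, b x x ≤ c)
    (p : V) (hp : p ∈ closure (convexHull ℝ s)) : b p p ≤ c := by
  have hconv : Convex ℝ {x : V | b x x ≤ c} := by
    intro x hx y hy t u ht hu htu
    have hcs := bilin_cs b hsymm hpos x y
    have hxy : |b x y| ≤ c := by
      have h1 : (b x y)^2 ≤ c^2 := by
        calc (b x y)^2 ≤ b x x * b y y := hcs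
        _ ≤ c^2 := by nlinarith [mul_le_mul hx hy (hpos y) hc]
      nlinarith [abs_nonneg (b x y), sq_abs (b x y)]
    have hexp : b (t • x + u • y) (t • x + u • y)
        = t * t * b x x + 2 * (t * u) * b x y + u * u * b y y := by
      simp [map_add, map_smul, LinearMap.add_apply, LinearMap.smul_apply,
        smul_eq_mul, hsymm y x]
      ring
    have : b x y ≤ c := (abs_le.mp hxy).2
    have h1 : (t + u) * (t + u) = 1 := by rw [htu]; ring
    rw [Set.mem_setOf_eq, hexp]
    nlinarith [h1, mul_nonneg (mul_nonneg ht ht) (sub_nonneg.2 hx),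
      mul_nonneg (mul_nonneg hu hu) (sub_nonneg.2 hy),
      mul_nonneg (mul_nonneg ht hu) (sub_nonneg.2 this)]
  have hclosed : IsClosed {x : V | b x x ≤ c} :=
    isClosed_le (bilin_quad_continuous b M hbdd) continuous_const
  have h1 : convexHull ℝ s ⊆ {x : V | b x x ≤ c} := convexHull_min hs hconv
  exact closure_minimal h1 hclosed hp

/-- Lemma A: if `ι uₖ → h` and `uₖ` is bounded, there is `p` with `ι p = h` lying in
every tail closed convex hull. -/
lemma exists_mem_tail_hulls {V H : Type*}
    [NormedAddCommGroup V] [InnerProductSpace ℝ V] [CompleteSpace V]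
    [NormedAddCommGroup H] [NormedSpace ℝ H]
    (ι : V →L[ℝ] H) (u : ℕ → V) (B : ℝ) (hB : ∀ k, ‖u k‖ ≤ B)
    (h : H) (hconv : Tendsto (fun k => ι (u k)) atTop (𝓝 h)) :
    ∃ p : V, ι p = h ∧ ∀ N, p ∈ closure (convexHull ℝ (u '' Set.Ici N)) := by
  set K : ℕ → Set V := fun N => closure (convexHull ℝ (u '' Set.Ici N)) with hK
  have hKne : ∀ N, (K N).Nonempty := fun N =>
    ⟨u N, subset_closure (subset_convexHull ℝ _ ⟨N, Set.self_mem_Ici, rfl⟩)⟩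
  have hKclosed : ∀ N, IsClosed (K N) := fun N => isClosed_closure
  have hKconv : ∀ N, Convex ℝ (K N) := fun N => (convex_convexHull ℝ _).closure
  have hKmono : ∀ {M N : ℕ}, M ≤ N → K N ⊆ K M := fun {M N} hMN =>
    closure_mono (convexHull_mono (Set.image_mono fun x hx => le_trans hMN hx))
  have hKball : ∀ N, K N ⊆ Metric.closedBall (0 : V) B := by
    intro N
    refine closure_minimal (convexHull_min ?_ (convex_closedBall 0 B)) Metric.isClosed_closedBall
    rintro x ⟨k, -, rfl⟩
    simpa [Metric.mem_closedBall, dist_eq_norm] using hB k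
  -- projections of 0 onto K N
  have hproj : ∀ N, ∃ v ∈ K N, ‖(0 : V) - v‖ = ⨅ w : K N, ‖(0 : V) - (w : V)‖ :=
    fun N => exists_norm_eq_iInf_of_complete_convex (hKne N)
      ((hKclosed N).isComplete) (hKconv N) 0
  choose v hvK hvmin using hproj
  set d : ℕ → ℝ := fun N => ‖v N‖ with hd
  have hdlow : ∀ N (w : V), w ∈ K N → d N ≤ ‖w‖ := by
    intro N w hw
    have hbdd : BddBelow (Set.range fun w : K N => ‖(0 : V) - (w : V)‖) :=
      ⟨0, by rintro x ⟨w, rfl⟩; positivity⟩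
    have := ciInf_le hbdd (⟨w, hw⟩ : K N)
    rw [← hvmin N] at this
    simpa [norm_sub_rev] using this
  have hdmono : Monotone d := by
    intro M N hMN
    exact hdlow M (v N) (hKmono hMN (hvK N))
  have hdB : ∀ N, d N ≤ B := fun N => by
    have := hKball N (hvK N)
    simpa [Metric.mem_closedBall, dist_eq_norm] using this
  -- parallelogram estimate
  have hpar : ∀ {M N : ℕ}, M ≤ N → ‖v M - v N‖^2 ≤ 2 * (d N ^ 2 - d M ^ 2) := by
    intro M N hMN
    have hmid : (2 : ℝ)⁻¹ • v M + (2 : ℝ)⁻¹ • v N ∈ K M :=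
      (hKconv M) (hvK M) (hKmono hMN (hvK N)) (by norm_num) (by norm_num) (by norm_num)
    have hmid2 : d M ≤ ‖(2 : ℝ)⁻¹ • v M + (2 : ℝ)⁻¹ • v N‖ := hdlow M _ hmid
    have hsum : ‖v M + v N‖ = 2 * ‖(2 : ℝ)⁻¹ • v M + (2 : ℝ)⁻¹ • v N‖ := by
      rw [← norm_smul_of_nonneg (by norm_num : (0:ℝ) ≤ 2)]
      congr 1
      rw [smul_add]; rw [smul_smul, smul_smul]; norm_num
    have hpl := parallelogram_law_with_norm ℝ (v M) (v N)
    have h2 : 2 * d M ≤ ‖v M + v N‖ := by rw [hsum]; linarith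
    have h3 : (2 * d M)^2 ≤ ‖v M + v N‖^2 := by
      have h0 : 0 ≤ 2 * d M := by positivity
      nlinarith [norm_nonneg (v M + v N)]
    nlinarith [hpl]
  -- d converges, so d^2 is Cauchy-ish; v is Cauchy
  have hdtend : Tendsto d atTop (𝓝 (⨆ N, d N)) :=
    tendsto_atTop_ciSup hdmono ⟨B, by rintro x ⟨N, rfl⟩; exact hdB N⟩
  have hvcauchy : CauchySeq v := by
    rw [Metric.cauchySeq_iff']
    intro ε hε
    have hsq : Tendsto (fun N => (d N)^2) atTop (𝓝 ((⨆ N, d N)^2)) := hdtend.pow 2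
    have : ∀ᶠ N in atTop, (⨆ N, d N)^2 - (d N)^2 < ε^2 / 2 := by
      have := hsq.eventually (eventually_gt_nhds (by nlinarith [pow_pos hε 2] : (⨆ N, d N)^2 - ε^2/2 < (⨆ N, d N)^2))
      filter_upwards [this] with N hN
      linarith
    obtain ⟨N, hN⟩ := this.exists
    refine ⟨N, fun n hn => ?_⟩
    have hd2 : (d n)^2 ≤ (⨆ N, d N)^2 := by
      have h1 : d n ≤ ⨆ N, d N := le_ciSup ⟨B, by rintro x ⟨N, rfl⟩; exact hdB N⟩ n
      nlinarith [norm_nonneg (v n)]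
    have key : ‖v n - v N‖^2 < ε^2 := by
      have hp := hpar hn
      rw [norm_sub_rev (v N)] at hp
      nlinarith
    rw [dist_eq_norm]
    exact lt_of_pow_lt_pow_left₀ 2 hε.le key
  obtain ⟨p, hp⟩ := cauchySeq_tendsto_of_complete hvcauchy
  refine ⟨p, ?_, ?_⟩
  · -- ι p = h
    have h1 : Tendsto (fun N => ι (v N)) atTop (𝓝 (ι p)) := (ι.continuous.tendsto p).comp hp
    have h2 : Tendsto (fun N => ι (v N)) atTop (𝓝 h) := by
      rw [Metric.tendsto_atTop]
      intro ε hε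
      obtain ⟨N₀, hN₀⟩ := (Metric.tendsto_atTop.mp hconv) (ε/2) (by positivity)
      refine ⟨N₀, fun N hN => ?_⟩
      have hsub : K N ⊆ ι ⁻¹' Metric.closedBall h (ε/2) := by
        refine closure_minimal (convexHull_min ?_ ?_) ?_
        · rintro x ⟨k, hk, rfl⟩
          have := hN₀ k (le_trans hN hk)
          simp only [Set.mem_preimage, Metric.mem_closedBall]
          exact le_of_lt this
        · exact (convex_closedBall h (ε/2)).linear_preimage ι.toLinearMap
        · exact Metric.isClosed_closedBall.preimage ι.continuous
      have := hsub (hvK N)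
      simp only [Set.mem_preimage, Metric.mem_closedBall] at this
      calc dist (ι (v N)) h ≤ ε/2 := this
      _ < ε := by linarith
    exact tendsto_nhds_unique h1 h2
  · intro N
    refine (hKclosed N).mem_of_tendsto hp ?_
    filter_upwards [eventually_ge_atTop N] with M hM
    exact hKmono hM (hvK M)

set_option maxHeartbeats 1600000 in
theorem to_ritz_lower_bound
    {V H : Type*}
    [NormedAddCommGroup V] [InnerProductSpace ℝ V] [CompleteSpace V]
    [NormedAddCommGroup H] [InnerProductSpace ℝ H] [CompleteSpace H]
    (ι : V →L[ℝ] H) (hι_inj : Function.Injective ι)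
    (hι_cpt : IsCompactOperator ι)
    (a0 a1 : V →ₗ[ℝ] V →ₗ[ℝ] ℝ)
    (ha0_symm : ∀ u v : V, a0 u v = a0 v u)
    (ha1_symm : ∀ u v : V, a1 u v = a1 v u)
    (M : ℝ)
    (ha0_bdd : ∀ u v : V, |a0 u v| ≤ M * ‖u‖ * ‖v‖)
    (ha1_bdd : ∀ u v : V, |a1 u v| ≤ M * ‖u‖ * ‖v‖)
    (α : ℝ) (hα : 0 < α)
    (ha0_coer : ∀ v : V, α * ‖v‖ ^ 2 ≤ a0 v v)
    (ha1_coer : ∀ v : V, α * ‖v‖ ^ 2 ≤ a1 v v)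
    (T : V →ₗ[ℝ] V) (CV CT : ℝ)
    (hT_bdd : ∀ v : V, ‖T v‖ ≤ CV * ‖v‖)
    (hT_H : ∀ v : V, ‖ι (T v)‖ ≤ CT * ‖ι v‖)
    (S : ℕ → Submodule ℝ V) (hS_mono : Monotone S)
    (hS_ne : ∀ n, S n ≠ ⊥) (hS_fd : ∀ n, FiniteDimensional ℝ (S n))
    (lam1 : ℝ)
    (hlam1 : lam1 = sInf {x : ℝ | ∃ v : V, v ≠ 0 ∧
      x = ((a0 v v + a1 (T v) (T v)) / 2) / ‖ι v‖ ^ 2})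
    (hdensity : sInf {x : ℝ | ∃ v : V, (∃ n, v ∈ S n) ∧ v ≠ 0 ∧
      x = ((a0 v v + a1 (T v) (T v)) / 2) / ‖ι v‖ ^ 2} = lam1)
    (I : ℕ → V →ₗ[ℝ] V)
    (lamT : ℕ → ℝ)
    (hlamT : ∀ n, lamT n = sInf {x : ℝ | ∃ v : V, v ∈ S n ∧ v ≠ 0 ∧
      x = ((a0 v v + a1 (I n (T v)) (I n (T v))) / 2) / ‖ι v‖ ^ 2})
    -- Condition (ii): H¹-convergence of the interpolated transfer operator
    (hii : ∀ f : V, (∃ m, f ∈ S m) →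
      Tendsto (fun n => ‖I n (T f) - T f‖) atTop (𝓝 0))
    -- Condition (iii): L²-stability
    (C : ℝ) (hC : 0 < C)
    (hiii : ∀ m : ℕ, ∀ n ≥ m, ∀ v ∈ S m, ‖ι (I n (T v))‖ ≤ C * ‖ι v‖)
    :
    lam1 ≤ liminf lamT atTop := by
  classical
  -- basic facts
  obtain ⟨f0, hf0S, hf0ne⟩ := (Submodule.ne_bot_iff (S 0)).mp (hS_ne 0)
  have hQ0 : ∀ v : V, 0 ≤ a0 v v := fun v => le_trans (by positivity) (ha0_coer v)
  have hQ1 : ∀ v : V, 0 ≤ a1 v v := fun v => le_trans (by positivity) (ha1_coer v)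
  have hιne : ∀ v : V, v ≠ 0 → 0 < ‖ι v‖ := by
    intro v hv
    rw [norm_pos_iff]
    intro hz
    exact hv (hι_inj (by rw [hz, map_zero]))
  have hCT : 0 ≤ CT := by
    have h1 := hT_H f0
    have h2 := hιne f0 hf0ne
    nlinarith [norm_nonneg (ι (T f0))]
  have hM : 0 < M := by
    have h1 := ha0_coer f0
    have h2 := le_trans (le_abs_self _) (ha0_bdd f0 f0)
    have h3 : 0 < ‖f0‖ := norm_pos_iff.mpr hf0ne
    nlinarith [mul_pos h3 h3, mul_pos hα (mul_pos h3 h3)]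
  have hlamT_nonneg : ∀ n, 0 ≤ lamT n := by
    intro n
    rw [hlamT n]
    apply Real.sInf_nonneg
    rintro x ⟨v, -, -, rfl⟩
    exact div_nonneg (by linarith [hQ0 v, hQ1 (I n (T v))]) (by positivity)
  have hlam1_le : ∀ v : V, v ≠ 0 →
      lam1 ≤ ((a0 v v + a1 (T v) (T v)) / 2) / ‖ι v‖ ^ 2 := by
    intro v hv
    rw [hlam1]
    apply csInf_le
    · refine ⟨0, ?_⟩
      rintro x ⟨w, -, rfl⟩
      exact div_nonneg (by linarith [hQ0 w, hQ1 (T w)]) (by positivity)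
    · exact ⟨v, hv, rfl⟩
  -- lamT is eventually bounded above
  have hιf0 : 0 < ‖ι f0‖ := hιne f0 hf0ne
  have hbdd_above : ∀ᶠ n in atTop, lamT n ≤
      (M * ‖f0‖ ^ 2 + M * (‖T f0‖ + 1) ^ 2) / 2 / ‖ι f0‖ ^ 2 := by
    have hev := (hii f0 ⟨0, hf0S⟩).eventually (eventually_lt_nhds one_pos)
    filter_upwards [hev] with n hn
    have hmem : ((a0 f0 f0 + a1 (I n (T f0)) (I n (T f0))) / 2) / ‖ι f0‖ ^ 2 ∈
        {x : ℝ | ∃ v : V, v ∈ S n ∧ v ≠ 0 ∧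
          x = ((a0 v v + a1 (I n (T v)) (I n (T v))) / 2) / ‖ι v‖ ^ 2} :=
      ⟨f0, hS_mono (Nat.zero_le n) hf0S, hf0ne, rfl⟩
    have hle : lamT n ≤ ((a0 f0 f0 + a1 (I n (T f0)) (I n (T f0))) / 2) / ‖ι f0‖ ^ 2 := by
      rw [hlamT n]
      refine csInf_le ⟨0, ?_⟩ hmem
      rintro x ⟨v, -, -, rfl⟩
      exact div_nonneg (by linarith [hQ0 v, hQ1 (I n (T v))]) (by positivity)
    refine le_trans hle ?_
    have hb0 : a0 f0 f0 ≤ M * ‖f0‖ ^ 2 := by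
      have := le_trans (le_abs_self _) (ha0_bdd f0 f0); nlinarith
    have hnI : ‖I n (T f0)‖ ≤ ‖T f0‖ + 1 := by
      have := norm_sub_norm_le (I n (T f0)) (T f0)
      linarith
    have hb1 : a1 (I n (T f0)) (I n (T f0)) ≤ M * (‖T f0‖ + 1) ^ 2 := by
      have h1 := le_trans (le_abs_self _) (ha1_bdd (I n (T f0)) (I n (T f0)))
      have h2 : 0 ≤ ‖I n (T f0)‖ := norm_nonneg _
      have h4 : ‖I n (T f0)‖ * ‖I n (T f0)‖ ≤ (‖T f0‖ + 1) * (‖T f0‖ + 1) :=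
        mul_le_mul hnI hnI h2 (le_trans h2 hnI)
      nlinarith [mul_le_mul_of_nonneg_left h4 hM.le]
    gcongr
  -- the key eventual lower bound
  have main : ∀ ε : ℝ, 0 < ε → ∀ᶠ n in atTop, lam1 - ε ≤ lamT n := by
    intro ε hε
    by_contra hcon
    rw [Filter.not_eventually] at hcon
    have hfreq : ∃ᶠ n in atTop, lamT n < lam1 - ε := hcon.mono fun n h => not_le.mp h
    obtain ⟨φ, hφmono, hφ⟩ := extraction_of_frequently_atTop hfreq
    set L : ℝ := lam1 - ε / 2 with hLdef
    clear_value L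
    have hLpos : 0 < L := by
      have h1 := hlamT_nonneg (φ 0); have h2 := hφ 0; simp only [hLdef]; linarith
    -- choose near minimizers
    have hchoice : ∀ k, ∃ v : V, v ∈ S (φ k) ∧ v ≠ 0 ∧
        a0 v v + a1 (I (φ k) (T v)) (I (φ k) (T v)) < 2 * L * ‖ι v‖ ^ 2 := by
      intro k
      have hne : {x : ℝ | ∃ v : V, v ∈ S (φ k) ∧ v ≠ 0 ∧
          x = ((a0 v v + a1 (I (φ k) (T v)) (I (φ k) (T v))) / 2) / ‖ι v‖ ^ 2}.Nonempty :=
        ⟨_, f0, hS_mono (Nat.zero_le _) hf0S, hf0ne, rfl⟩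
      obtain ⟨x, ⟨v, hvS, hvne, rfl⟩, hxlt⟩ := Real.lt_sInf_add_pos hne (half_pos hε)
      rw [← hlamT] at hxlt
      refine ⟨v, hvS, hvne, ?_⟩
      have hd : 0 < ‖ι v‖ ^ 2 := pow_pos (hιne v hvne) 2
      have hx2 : ((a0 v v + a1 (I (φ k) (T v)) (I (φ k) (T v))) / 2) / ‖ι v‖ ^ 2 < L := by
        have := hφ k; simp only [hLdef]; linarith
      rw [div_lt_iff₀ hd] at hx2
      simp only [hLdef] at hx2 ⊢
      linarith
    choose v0 hv0S hv0ne hv0key using hchoice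
    -- normalize
    set u0 : ℕ → V := fun k => ‖ι (v0 k)‖⁻¹ • v0 k with hu0def
    set w0 : ℕ → V := fun k => I (φ k) (T (u0 k)) with hw0def
    have hc0pos : ∀ k, 0 < ‖ι (v0 k)‖ := fun k => hιne _ (hv0ne k)
    have hu0S : ∀ k, u0 k ∈ S (φ k) := fun k => Submodule.smul_mem _ _ (hv0S k)
    have hu0ι : ∀ k, ‖ι (u0 k)‖ = 1 := by
      intro k
      simp only [hu0def, map_smul, norm_smul, norm_inv, norm_norm]
      exact inv_mul_cancel₀ (hc0pos k).ne'
    have hkey : ∀ k, a0 (u0 k) (u0 k) + a1 (w0 k) (w0 k) < 2 * L := by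
      intro k
      have hw0eq : w0 k = ‖ι (v0 k)‖⁻¹ • I (φ k) (T (v0 k)) := by
        simp only [hw0def, hu0def, map_smul]
      have hexp : a0 (u0 k) (u0 k) + a1 (w0 k) (w0 k)
          = (‖ι (v0 k)‖⁻¹ * ‖ι (v0 k)‖⁻¹) *
            (a0 (v0 k) (v0 k) + a1 (I (φ k) (T (v0 k))) (I (φ k) (T (v0 k)))) := by
        rw [hw0eq]
        simp only [hu0def, map_smul, LinearMap.smul_apply, smul_eq_mul]
        ring
      rw [hexp]
      have hd : 0 < ‖ι (v0 k)‖ ^ 2 := pow_pos (hc0pos k) 2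
      have hkk := hv0key k
      have hinv : (‖ι (v0 k)‖⁻¹ * ‖ι (v0 k)‖⁻¹) = (‖ι (v0 k)‖ ^ 2)⁻¹ := by
        rw [← mul_inv]; ring_nf
      rw [hinv, inv_mul_lt_iff₀ hd]
      nlinarith
    set B : ℝ := Real.sqrt (2 * L / α) with hBdef
    have hB0 : 0 ≤ B := Real.sqrt_nonneg _
    have hsqB : ∀ x : V, ‖x‖ ^ 2 ≤ 2 * L / α → ‖x‖ ≤ B := by
      intro x hx
      rw [hBdef, ← Real.sqrt_sq (norm_nonneg x)]
      exact Real.sqrt_le_sqrt hx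
    have hu0B : ∀ k, ‖u0 k‖ ≤ B := by
      intro k
      apply hsqB
      have h1 := ha0_coer (u0 k)
      have h2 := hQ1 (w0 k)
      have h3 := hkey k
      rw [le_div_iff₀ hα]
      nlinarith
    have hw0B : ∀ k, ‖w0 k‖ ≤ B := by
      intro k
      apply hsqB
      have h1 := ha1_coer (w0 k)
      have h2 := hQ0 (u0 k)
      have h3 := hkey k
      rw [le_div_iff₀ hα]
      nlinarith
    -- extraction 1 : compactness of ι
    obtain ⟨Kc, hKc, hKnhds⟩ := hι_cpt
    obtain ⟨r, hr, hballsub⟩ := Metric.mem_nhds_iff.mp hKnhds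
    set c0 : ℝ := r / (2 * (B + 1)) with hc0def
    have hc0 : 0 < c0 := by rw [hc0def]; exact div_pos hr (by linarith)
    have hmem : ∀ k, ι (c0 • u0 k) ∈ Kc := by
      intro k
      apply hballsub
      rw [mem_ball_zero_iff, norm_smul, Real.norm_eq_abs, abs_of_pos hc0]
      have h1 : c0 * ‖u0 k‖ ≤ c0 * B := by
        exact mul_le_mul_of_nonneg_left (hu0B k) hc0.le
      have h2 : c0 * (B + 1) = r / 2 := by
        rw [hc0def]; field_simp
      linarith
    obtain ⟨aH, -, ψ1, hψ1mono, hψ1tend⟩ :=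
      hKc.tendsto_subseq (x := fun k => ι (c0 • u0 k)) hmem
    set hinf : H := c0⁻¹ • aH with hinfdef
    have hψ1tend' : Tendsto (fun j => ι (u0 (ψ1 j))) atTop (𝓝 hinf) := by
      have h1 := hψ1tend.const_smul c0⁻¹
      have h2 : (fun j => c0⁻¹ • ((fun k => ι (c0 • u0 k)) ∘ ψ1) j)
          = fun j => ι (u0 (ψ1 j)) := by
        funext j
        simp [Function.comp, map_smul, smul_smul, inv_mul_cancel₀ hc0.ne']
      rwa [h2] at h1
    -- extraction 2 : Bolzano-Weierstrass for the a0 values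
    have hmem2 : ∀ j, a0 (u0 (ψ1 j)) (u0 (ψ1 j)) ∈ Set.Icc (0:ℝ) (2 * L) := by
      intro j
      exact ⟨hQ0 _, by have := hkey (ψ1 j); have := hQ1 (w0 (ψ1 j)); linarith⟩
    obtain ⟨A, hAmem, ψ2, hψ2mono, hψ2tend⟩ := isCompact_Icc.tendsto_subseq hmem2
    -- extraction 3 : for the a1 values
    have hmem3 : ∀ j, a1 (w0 (ψ1 (ψ2 j))) (w0 (ψ1 (ψ2 j))) ∈ Set.Icc (0:ℝ) (2 * L) := by
      intro j
      exact ⟨hQ1 _, by have := hkey (ψ1 (ψ2 j)); have := hQ0 (u0 (ψ1 (ψ2 j))); linarith⟩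
    obtain ⟨A1, hA1mem, ψ3, hψ3mono, hψ3tend⟩ := isCompact_Icc.tendsto_subseq hmem3
    -- assemble the final subsequence
    set σ : ℕ → ℕ := fun k => ψ1 (ψ2 (ψ3 k)) with hσdef
    set nφ : ℕ → ℕ := fun k => φ (σ k) with hnφdef
    have hnφtend : Tendsto nφ atTop atTop :=
      (hφmono.comp (hψ1mono.comp (hψ2mono.comp hψ3mono))).tendsto_atTop
    set U : ℕ → V := fun k => u0 (σ k) with hUdef
    set W : ℕ → V := fun k => w0 (σ k) with hWdef2
    have hUS : ∀ k, U k ∈ S (nφ k) := fun k => hu0S (σ k)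
    have hUι1 : ∀ k, ‖ι (U k)‖ = 1 := fun k => hu0ι (σ k)
    have hUB : ∀ k, ‖U k‖ ≤ B := fun k => hu0B (σ k)
    have hWB : ∀ k, ‖W k‖ ≤ B := fun k => hw0B (σ k)
    have hWeq : ∀ k, W k = I (nφ k) (T (U k)) := fun k => rfl
    have hUconv : Tendsto (fun k => ι (U k)) atTop (𝓝 hinf) := by
      have h1 := hψ1tend'.comp ((hψ2mono.comp hψ3mono).tendsto_atTop)
      convert h1 using 1
      rfl
    have hA0 : Tendsto (fun k => a0 (U k) (U k)) atTop (𝓝 A) := by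
      have h1 := hψ2tend.comp hψ3mono.tendsto_atTop
      convert h1 using 1
      rfl
    have hA1t : Tendsto (fun k => a1 (W k) (W k)) atTop (𝓝 A1) := hψ3tend
    have hAsum : A + A1 ≤ 2 * L :=
      le_of_tendsto' (hA0.add hA1t) (fun k => (hkey (σ k)).le)
    -- limit point u∞
    obtain ⟨uinf, huinfι, huinfhull⟩ := exists_mem_tail_hulls ι U B hUB hinf hUconv
    have hinfnorm : ‖hinf‖ = 1 := by
      have h1 : Tendsto (fun k => ‖ι (U k)‖) atTop (𝓝 ‖hinf‖) := hUconv.norm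
      have h2 : Tendsto (fun k => ‖ι (U k)‖) atTop (𝓝 1) := by
        simp only [hUι1]; exact tendsto_const_nhds
      exact tendsto_nhds_unique h1 h2
    have huinfne : uinf ≠ 0 := by
      intro hz
      rw [hz, map_zero] at huinfι
      rw [← huinfι, norm_zero] at hinfnorm
      norm_num at hinfnorm
    -- u∞ lies in the closure of the union of the S n
    have huinfP : uinf ∈ closure ((⨆ n, S n : Submodule ℝ V) : Set V) := by
      have h1 := huinfhull 0
      refine closure_mono (convexHull_min ?_ (⨆ n, S n : Submodule ℝ V).convex) h1
      rintro x ⟨k, -, rfl⟩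
      exact Submodule.mem_iSup_of_directed S hS_mono.directed_le |>.mpr ⟨nφ k, hUS k⟩
    have happrox : ∀ δ : ℝ, 0 < δ → ∃ f : V, (∃ m, f ∈ S m) ∧ ‖f - uinf‖ < δ := by
      intro δ hδ
      obtain ⟨f, hfP, hfd⟩ := Metric.mem_closure_iff.mp huinfP δ hδ
      refine ⟨f, (Submodule.mem_iSup_of_directed S hS_mono.directed_le).mp hfP, ?_⟩
      rw [← dist_eq_norm, dist_comm]
      exact hfd
    -- ι (W k) → ι (T u∞)
    have hWconv : Tendsto (fun k => ι (W k)) atTop (𝓝 (ι (T uinf))) := by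
      rw [Metric.tendsto_atTop]
      intro η hη
      set X : ℝ := (C + CT) * ‖ι‖ + 1 with hXdef
      have hXpos : 0 < X := by positivity
      obtain ⟨f, ⟨m, hfm⟩, hfu⟩ := happrox (η / (4 * X)) (by positivity)
      have hterm3 : (C + CT) * ‖ι‖ * (η / (4 * X)) ≤ η / 4 := by
        have e1 : (C + CT) * ‖ι‖ ≤ X := by simp only [hXdef]; linarith
        have e2 : (C + CT) * ‖ι‖ * (η / (4 * X)) ≤ X * (η / (4 * X)) :=
          mul_le_mul_of_nonneg_right e1 (by positivity)
        have e3 : X * (η / (4 * X)) = η / 4 := by field_simp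
        linarith
      have ev1 : ∀ᶠ k in atTop, dist (ι (U k)) hinf < η / (4 * (C + 1)) := by
        have := Metric.tendsto_atTop.mp hUconv (η / (4 * (C + 1))) (by positivity)
        obtain ⟨N, hN⟩ := this
        exact eventually_atTop.mpr ⟨N, hN⟩
      have ev2 : ∀ᶠ k in atTop, ‖I (nφ k) (T f) - T f‖ < η / (4 * (‖ι‖ + 1)) := by
        have h1 := (hii f ⟨m, hfm⟩).comp hnφtend
        exact h1.eventually (eventually_lt_nhds (by positivity))
      have ev3 : ∀ᶠ k in atTop, m ≤ nφ k := hnφtend.eventually (eventually_ge_atTop m)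
      rw [← eventually_atTop]
      filter_upwards [ev1, ev2, ev3] with k h1 h2 h3
      have hfn : f ∈ S (nφ k) := hS_mono h3 hfm
      have hUf : U k - f ∈ S (nφ k) := Submodule.sub_mem _ (hUS k) hfn
      have ht1 : ‖ι (I (nφ k) (T (U k - f)))‖ ≤ C * ‖ι (U k) - ι f‖ := by
        simpa only [map_sub] using hiii (nφ k) (nφ k) le_rfl (U k - f) hUf
      have hdecomp : ι (W k) - ι (T uinf)
          = ι (I (nφ k) (T (U k - f))) + ι (I (nφ k) (T f) - T f) + ι (T (f - uinf)) := by
        rw [hWeq k]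
        simp only [map_sub]
        abel
      have hb1 : ‖ι (U k) - ι f‖ ≤ dist (ι (U k)) hinf + ‖ι‖ * ‖f - uinf‖ := by
        have e1 : ι (U k) - ι f = (ι (U k) - hinf) + (ι uinf - ι f) := by
          rw [huinfι]; abel
        rw [e1]
        refine le_trans (norm_add_le _ _) ?_
        rw [dist_eq_norm]
        have e2 : ι uinf - ι f = ι (uinf - f) := by rw [map_sub]
        rw [e2]
        have e3 : ‖ι (uinf - f)‖ ≤ ‖ι‖ * ‖uinf - f‖ := ι.le_opNorm _
        rw [norm_sub_rev uinf f] at e3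
        linarith
      have hb2 : ‖ι (I (nφ k) (T f) - T f)‖ ≤ ‖ι‖ * ‖I (nφ k) (T f) - T f‖ := ι.le_opNorm _
      have hb3 : ‖ι (T (f - uinf))‖ ≤ CT * (‖ι‖ * ‖f - uinf‖) := by
        refine le_trans (hT_H _) ?_
        exact mul_le_mul_of_nonneg_left (ι.le_opNorm _) hCT
      rw [dist_eq_norm, hdecomp]
      have htot := le_trans norm_add₃_le
        (add_le_add (add_le_add (le_trans ht1 (mul_le_mul_of_nonneg_left hb1 hC.le)) hb2) hb3)
      -- numeric bookkeeping
      rw [mul_add] at htot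
      have hn1 : C * dist (ι (U k)) hinf < C * (η / (4 * (C + 1))) :=
        mul_lt_mul_of_pos_left h1 hC
      have hn1' : C * (η / (4 * (C + 1))) < (C + 1) * (η / (4 * (C + 1))) :=
        mul_lt_mul_of_pos_right (lt_add_one C) (by positivity)
      have hn1e : (C + 1) * (η / (4 * (C + 1))) = η / 4 := by
        have hne : C + 1 ≠ 0 := by positivity
        field_simp
      have hn2 : ‖ι‖ * ‖I (nφ k) (T f) - T f‖ ≤ ‖ι‖ * (η / (4 * (‖ι‖ + 1))) :=
        mul_le_mul_of_nonneg_left h2.le (norm_nonneg ι)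
      have hn2' : ‖ι‖ * (η / (4 * (‖ι‖ + 1))) < (‖ι‖ + 1) * (η / (4 * (‖ι‖ + 1))) :=
        mul_lt_mul_of_pos_right (lt_add_one _) (by positivity)
      have hn2e : (‖ι‖ + 1) * (η / (4 * (‖ι‖ + 1))) = η / 4 := by
        have hne : ‖ι‖ + 1 ≠ 0 := by positivity
        field_simp
      have hg1 : ‖ι‖ * ‖f - uinf‖ ≤ ‖ι‖ * (η / (4 * X)) :=
        mul_le_mul_of_nonneg_left hfu.le (norm_nonneg _)
      have hg2 : (C + CT) * (‖ι‖ * ‖f - uinf‖) ≤ (C + CT) * (‖ι‖ * (η / (4 * X))) :=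
        mul_le_mul_of_nonneg_left hg1 (by positivity)
      have hg3 : (C + CT) * (‖ι‖ * (η / (4 * X))) = (C + CT) * ‖ι‖ * (η / (4 * X)) := by
        ring
      have hsplit : C * (‖ι‖ * ‖f - uinf‖) + CT * (‖ι‖ * ‖f - uinf‖)
          = (C + CT) * (‖ι‖ * ‖f - uinf‖) := by ring
      linarith
    -- limit point of W is T u∞
    obtain ⟨q, hqι, hqhull⟩ := exists_mem_tail_hulls ι W B hWB (ι (T uinf)) hWconv
    have hqeq : q = T uinf := hι_inj hqι
    rw [hqeq] at hqhull
    -- lower semicontinuity via Lemma B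
    have hA0nn : 0 ≤ A := hAmem.1
    have hA1nn : 0 ≤ A1 := hA1mem.1
    have ha0fin : a0 uinf uinf ≤ A := by
      refine le_of_forall_pos_le_add fun δ hδ => ?_
      obtain ⟨N, hN⟩ := eventually_atTop.mp
        (hA0.eventually (eventually_le_nhds (lt_add_of_pos_right A hδ)))
      refine quad_le_on_closure_convexHull a0 ha0_symm M ha0_bdd hQ0
        (U '' Set.Ici N) (A + δ) (by linarith) ?_ uinf (huinfhull N)
      rintro x ⟨k, hk, rfl⟩
      exact hN k hk
    have ha1fin : a1 (T uinf) (T uinf) ≤ A1 := by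
      refine le_of_forall_pos_le_add fun δ hδ => ?_
      obtain ⟨N, hN⟩ := eventually_atTop.mp
        (hA1t.eventually (eventually_le_nhds (lt_add_of_pos_right A1 hδ)))
      refine quad_le_on_closure_convexHull a1 ha1_symm M ha1_bdd hQ1
        (W '' Set.Ici N) (A1 + δ) (by linarith) ?_ (T uinf) (hqhull N)
      rintro x ⟨k, hk, rfl⟩
      exact hN k hk
    -- final contradiction
    have hlow := hlam1_le uinf huinfne
    have hnorm1 : ‖ι uinf‖ ^ 2 = 1 := by
      rw [huinfι, hinfnorm]; norm_num
    rw [hnorm1, div_one] at hlow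
    have : lam1 ≤ L := by
      have h1 : (a0 uinf uinf + a1 (T uinf) (T uinf)) / 2 ≤ (A + A1) / 2 := by linarith
      have h2 : (A + A1) / 2 ≤ L := by linarith
      linarith
    simp only [hLdef] at this
    linarith
  -- conclude
  have hbd : IsBoundedUnder (· ≤ ·) atTop lamT := isBoundedUnder_of_eventually_le hbdd_above
  have hco : IsCoboundedUnder (· ≥ ·) atTop lamT := hbd.isCoboundedUnder_ge
  by_contra hlt
  push_neg at hlt
  have hε : 0 < (lam1 - liminf lamT atTop) / 2 := by linarith
  have := le_liminf_of_le hco (main _ hε)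
  linarith
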